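/- arXiv:1912.10185 — 6 statements merged into one kernel-verified Lean document; each statement's English description precedes it below -/
import Mathlib

section
/- Let X be a measurable space and let μ and ν be probability measures on X. Let m = (1/2)•(μ + ν) be the midpoint measure. Then the quantity KL(μ ‖ m) + KL(ν ‖ m) − log 4 (the value of the GAN adversarial objective at the optimal discriminator) is at least −log 4, and it equals −log 4 if and only if ν = μ. In particular, the global minimum over generator distributions ν of the adversarial loss is −log 4, attained exactly when the generator distribution equals the data distribution. -/
open MeasureTheory
open scoped ENNReal

/-- Key lemma: for probability measures `p ≪ m` with bounded density, the KL integral is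
nonnegative, and zero only if `p = m`. -/
private lemma kl_key {X : Type*} [MeasurableSpace X] (p m : Measure X)
    [IsProbabilityMeasure p] [IsProbabilityMeasure m]
    (hpm : p ≪ m) (hle : ∀ᵐ x ∂m, p.rnDeriv m x ≤ 2) :
    0 ≤ ∫ x, llr p m x ∂p ∧ (∫ x, llr p m x ∂p = 0 → p = m) := by
  set f := p.rnDeriv m with hf
  have hf_meas : Measurable f := Measure.measurable_rnDeriv p m
  have hwd : m.withDensity f = p := Measure.withDensity_rnDeriv_eq p m hpm
  have hp_le : ∀ᵐ x ∂p, f x ≤ 2 := hpm.ae_le hle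
  have hp_pos : ∀ᵐ x ∂p, 0 < f x := Measure.rnDeriv_pos hpm
  -- integrability of llr
  have h_int : Integrable (llr p m) p := by
    refine ⟨(measurable_llr p m).aestronglyMeasurable, ?_⟩
    have heq : ∫⁻ x, (‖llr p m x‖₊ : ℝ≥0∞) ∂p
        = ∫⁻ x, (f * fun x => (‖llr p m x‖₊ : ℝ≥0∞)) x ∂m := by
      have := lintegral_withDensity_eq_lintegral_mul m hf_meas
        (measurable_llr p m).nnnorm.coe_nnreal_ennreal
      rw [hwd] at this
      exact this
    have hbd : ∀ᵐ x ∂m, (f * fun x => (‖llr p m x‖₊ : ℝ≥0∞)) x ≤ 2 := by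
      filter_upwards [hle] with x hx
      simp only [Pi.mul_apply]
      rcases eq_or_ne (f x) 0 with h0 | h0
      · simp [h0]
      · have hlt : f x < ⊤ := hx.trans_lt (by norm_num)
        set t := (f x).toReal with ht
        have ht_pos : 0 < t := ENNReal.toReal_pos h0 hlt.ne
        have ht2 : t ≤ 2 := by
          have := (ENNReal.toReal_le_toReal hlt.ne (by norm_num)).mpr hx
          simpa using this
        have hlog : llr p m x = Real.log t := rfl
        have hlb : 1 - t⁻¹ ≤ Real.log t := by
          have h := Real.log_le_sub_one_of_pos (inv_pos.mpr ht_pos)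
          rw [Real.log_inv] at h; linarith
        have key : t * |Real.log t| ≤ 2 := by
          rcases le_total t 1 with h1 | h1
          · rw [abs_of_nonpos (Real.log_nonpos ht_pos.le h1)]
            have h2 : t * (-Real.log t) ≤ t * (t⁻¹ - 1) := by nlinarith
            have h3 : t * (t⁻¹ - 1) = 1 - t := by field_simp
            linarith
          · rw [abs_of_nonneg (Real.log_nonneg h1)]
            have := Real.log_le_sub_one_of_pos ht_pos
            nlinarith
        calc f x * (‖llr p m x‖₊ : ℝ≥0∞)
            = ENNReal.ofReal t * ENNReal.ofReal |Real.log t| := by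
              rw [ENNReal.ofReal_toReal hlt.ne, hlog, ← enorm_eq_nnnorm, Real.enorm_eq_ofReal_abs]
          _ = ENNReal.ofReal (t * |Real.log t|) := by
              rw [ENNReal.ofReal_mul ht_pos.le]
          _ ≤ ENNReal.ofReal 2 := ENNReal.ofReal_le_ofReal key
          _ = 2 := by norm_num
    show (∫⁻ x, (‖llr p m x‖₊ : ℝ≥0∞) ∂p) < ⊤
    rw [heq]
    calc ∫⁻ x, (f * fun x => (‖llr p m x‖₊ : ℝ≥0∞)) x ∂m
        ≤ ∫⁻ _, 2 ∂m := lintegral_mono_ae hbd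
      _ = 2 := by simp
      _ < ⊤ := by norm_num
  -- the function g = (f)⁻¹.toReal
  have hinv_meas : Measurable fun x => (f x)⁻¹ := hf_meas.inv
  have hL : ∫⁻ x, (f x)⁻¹ ∂p = ∫⁻ x, f x * (f x)⁻¹ ∂m := by
    rw [← hwd, lintegral_withDensity_eq_lintegral_mul m hf_meas hinv_meas]
    rfl
  have hL_le : ∫⁻ x, (f x)⁻¹ ∂p ≤ 1 := by
    rw [hL]
    calc ∫⁻ x, f x * (f x)⁻¹ ∂m ≤ ∫⁻ _, 1 ∂m :=
          lintegral_mono fun x => ENNReal.mul_inv_le_one _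
      _ = 1 := by simp
  set g : X → ℝ := fun x => ((f x)⁻¹).toReal with hg
  have hg_int : Integrable g p :=
    integrable_toReal_of_lintegral_ne_top hinv_meas.aemeasurable
      (ne_top_of_le_ne_top (by norm_num) hL_le)
  have hg_eq : ∫ x, g x ∂p = (∫⁻ x, (f x)⁻¹ ∂p).toReal :=
    integral_toReal hinv_meas.aemeasurable
      (hp_pos.mono fun x hx => ENNReal.inv_lt_top.mpr hx)
  have hg_le : ∫ x, g x ∂p ≤ 1 := by
    rw [hg_eq]
    have := ENNReal.toReal_mono (by norm_num) hL_le
    simpa using this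
  -- pointwise inequality
  have h_ae : ∀ᵐ x ∂p, 1 - g x ≤ llr p m x := by
    filter_upwards [hp_pos, hp_le] with x hx0 hx2
    have hlt : f x < ⊤ := hx2.trans_lt (by norm_num)
    have ht_pos : 0 < (f x).toReal := ENNReal.toReal_pos hx0.ne' hlt.ne
    have hginv : g x = ((f x).toReal)⁻¹ := ENNReal.toReal_inv _
    have hlog : llr p m x = Real.log (f x).toReal := rfl
    have h := Real.log_le_sub_one_of_pos (inv_pos.mpr ht_pos)
    rw [Real.log_inv] at h
    rw [hginv, hlog]; linarith
  have h_one_sub_int : Integrable (fun x => 1 - g x) p := (integrable_const 1).sub hg_int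
  have h2' : ∫ x, (1 - g x) ∂p = 1 - ∫ x, g x ∂p := by
    rw [integral_sub (integrable_const 1) hg_int]; simp
  have h_nonneg : 0 ≤ ∫ x, llr p m x ∂p := by
    have h1 : ∫ x, (1 - g x) ∂p ≤ ∫ x, llr p m x ∂p :=
      integral_mono_ae h_one_sub_int h_int h_ae
    linarith
  refine ⟨h_nonneg, fun h_zero => ?_⟩
  -- difference function
  set d : X → ℝ := fun x => llr p m x - (1 - g x) with hd
  have hd_int : Integrable d p := h_int.sub h_one_sub_int
  have hd_nonneg : 0 ≤ᵐ[p] d := h_ae.mono fun x hx => by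
    simp only [hd, Pi.zero_apply]; linarith
  have hIntd : ∫ x, d x ∂p = ∫ x, g x ∂p - 1 := by
    simp only [hd]
    rw [integral_sub h_int h_one_sub_int, h_zero, h2']; ring
  have hd_nn_int : 0 ≤ ∫ x, d x ∂p := integral_nonneg_of_ae hd_nonneg
  have hg_one : ∫ x, g x ∂p = 1 := le_antisymm hg_le (by linarith)
  have hd_zero : ∫ x, d x ∂p = 0 := by rw [hIntd, hg_one]; ring
  have hd_ae0 : d =ᵐ[p] 0 := (integral_eq_zero_iff_of_nonneg_ae hd_nonneg hd_int).mp hd_zero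
  -- f = 1 a.e. p
  have hf_one_p : ∀ᵐ x ∂p, f x = 1 := by
    filter_upwards [hd_ae0, hp_pos, hp_le] with x hx hx0 hx2
    have hlt : f x < ⊤ := hx2.trans_lt (by norm_num)
    set t := (f x).toReal with ht
    have ht_pos : 0 < t := ENNReal.toReal_pos hx0.ne' hlt.ne
    by_contra hne
    have htne : t ≠ 1 := fun h => hne ((ENNReal.toReal_eq_one_iff _).mp h)
    have hstr := Real.log_lt_sub_one_of_pos (inv_pos.mpr ht_pos)
      (fun h => htne (inv_eq_one.mp h))
    rw [Real.log_inv] at hstr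
    have hginv : g x = t⁻¹ := ENNReal.toReal_inv _
    have hlog : llr p m x = Real.log t := rfl
    have hx' : llr p m x - (1 - g x) = 0 := hx
    rw [hlog, hginv] at hx'
    linarith
  -- lintegral of inverse is 1
  have hL1 : ∫⁻ x, (f x)⁻¹ ∂p = 1 := by
    have h := hg_eq.symm.trans hg_one
    exact (ENNReal.toReal_eq_one_iff _).mp h
  -- f ≠ 0 a.e. m
  have hs_ne : MeasurableSet {x | f x ≠ 0} := (hf_meas (measurableSet_singleton 0)).compl
  have hm_ne : ∀ᵐ x ∂m, f x ≠ 0 := by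
    have hle1 : (1:ℝ≥0∞) ≤ m {x | f x ≠ 0} := by
      calc (1:ℝ≥0∞) = ∫⁻ x, f x * (f x)⁻¹ ∂m := by rw [← hL, hL1]
        _ ≤ ∫⁻ x, {x | f x ≠ 0}.indicator (fun _ => 1) x ∂m := by
            refine lintegral_mono fun x => ?_
            rcases eq_or_ne (f x) 0 with h|h
            · simp [h]
            · have hmem : x ∈ {x | f x ≠ 0} := h
              rw [Set.indicator_of_mem hmem]
              exact ENNReal.mul_inv_le_one _
        _ = m {x | f x ≠ 0} := by rw [lintegral_indicator hs_ne]; simp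
    have heq1 : m {x | f x ≠ 0} = 1 := le_antisymm prob_le_one hle1
    have hcompl : m {x | f x ≠ 0}ᶜ = 0 := by
      rw [measure_compl hs_ne (measure_ne_top m _), heq1, measure_univ, tsub_self]
    rw [ae_iff]
    simpa [Set.compl_setOf] using hcompl
  -- f = 1 a.e. m
  have hA : MeasurableSet {x | f x ≠ 1} := (hf_meas (measurableSet_singleton 1)).compl
  have hpA : p {x | f x ≠ 1} = 0 := by
    rw [ae_iff] at hf_one_p
    simpa using hf_one_p
  have hint0 : ∫⁻ x in {x | f x ≠ 1}, f x ∂m = 0 := by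
    rw [← withDensity_apply f hA, hwd]
    exact hpA
  have h0 := (setLIntegral_eq_zero_iff hA hf_meas).mp hint0
  have hf_one_m : f =ᵐ[m] fun _ => 1 := by
    filter_upwards [h0, hm_ne] with x hx hx0
    by_contra hne
    exact hx0 (hx hne)
  calc p = m.withDensity f := hwd.symm
    _ = m.withDensity (fun _ => 1) := withDensity_congr_ae hf_one_m
    _ = m := withDensity_one

/-- Kullback–Leibler divergence of `μ` with respect to `m`, as the integral of the
logarithm of the Radon–Nikodym derivative (valid whenever `μ ≪ m`). -/
noncomputable def klDiv {X : Type*} [MeasurableSpace X] (μ m : Measure X) : ℝ :=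
  ∫ x, Real.log ((μ.rnDeriv m) x).toReal ∂μ

private lemma klDiv_eq_integral_llr2 {X : Type*} [MeasurableSpace X] (p m : Measure X) :
    klDiv p m = ∫ x, llr p m x ∂p := rfl

/-- The GAN adversarial objective at the optimal discriminator,
`KL(μ ‖ m) + KL(ν ‖ m) − log 4` with `m = (1/2) • (μ + ν)`, is at least `−log 4`,
with equality if and only if the generator distribution `ν` equals the data
distribution `μ`. -/
theorem adversarial_loss_global_minimum {X : Type*} [MeasurableSpace X]
    (μ ν : Measure X) [IsProbabilityMeasure μ] [IsProbabilityMeasure ν]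
    (m : Measure X) (hm : m = (1/2 : ℝ≥0∞) • (μ + ν)) :
    -Real.log 4 ≤ klDiv μ m + klDiv ν m - Real.log 4 ∧
      (klDiv μ m + klDiv ν m - Real.log 4 = -Real.log 4 ↔ ν = μ) := by
  have hhalf : (2:ℝ≥0∞) * (1/2) = 1 := by
    rw [one_div, ENNReal.mul_inv_cancel two_ne_zero ENNReal.ofNat_ne_top]
  haveI hmprob : IsProbabilityMeasure m := by
    constructor
    rw [hm]
    simp only [Measure.smul_apply, Measure.add_apply, measure_univ, smul_eq_mul]
    rw [one_add_one_eq_two, mul_comm, hhalf]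
  -- absolute continuity
  have hac : ∀ p : Measure X, (∀ s, p s ≤ μ s + ν s) → p ≪ m := by
    intro p hp
    refine Measure.AbsolutelyContinuous.mk fun s hs h0 => ?_
    rw [hm] at h0
    simp only [Measure.smul_apply, Measure.add_apply, smul_eq_mul] at h0
    rcases mul_eq_zero.mp h0 with h | h
    · exact absurd h (by norm_num)
    · exact le_antisymm (le_trans (hp s) h.le) zero_le
  have hμm : μ ≪ m := hac μ fun s => le_add_right le_rfl
  have hνm : ν ≪ m := hac ν fun s => le_add_left le_rfl
  -- rnDeriv bounds
  have hbound : ∀ p : Measure X, (∀ s, p s ≤ μ s + ν s) → ∀ᵐ x ∂m, p.rnDeriv m x ≤ 2 := by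
    intro p hp
    refine ae_le_of_forall_setLIntegral_le_of_sigmaFinite (Measure.measurable_rnDeriv p m)
      fun s hs hfin => ?_
    calc ∫⁻ x in s, p.rnDeriv m x ∂m ≤ p s := Measure.setLIntegral_rnDeriv_le s
      _ ≤ μ s + ν s := hp s
      _ = 2 * m s := by
          rw [hm]
          simp only [Measure.smul_apply, Measure.add_apply, smul_eq_mul]
          rw [← mul_assoc, hhalf, one_mul]
      _ = ∫⁻ _ in s, 2 ∂m := by rw [setLIntegral_const, mul_comm]
  have hkeyμ := kl_key μ m hμm (hbound μ fun s => le_add_right le_rfl)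
  have hkeyν := kl_key ν m hνm (hbound ν fun s => le_add_left le_rfl)
  rw [klDiv_eq_integral_llr2, klDiv_eq_integral_llr2]
  constructor
  · linarith [hkeyμ.1, hkeyν.1]
  constructor
  · intro h
    have hsum : ∫ x, llr μ m x ∂μ + ∫ x, llr ν m x ∂ν = 0 := by linarith
    have hμ0 : ∫ x, llr μ m x ∂μ = 0 := le_antisymm (by linarith [hkeyν.1]) hkeyμ.1
    have hμeq : μ = m := hkeyμ.2 hμ0
    -- conclude ν = μ
    ext s hs
    have h1 : m s = (1/2 : ℝ≥0∞) * (μ s + ν s) := by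
      rw [hm]; simp only [Measure.smul_apply, Measure.add_apply, smul_eq_mul]
    rw [← hμeq] at h1
    have h2 : (2:ℝ≥0∞) * ((1/2) * (μ s + ν s)) = μ s + ν s := by
      rw [← mul_assoc, hhalf, one_mul]
    rw [← h1, two_mul] at h2
    exact ((ENNReal.add_right_inj (measure_ne_top μ s)).mp h2.symm)
  · rintro rfl
    have hmμ : m = ν := by
      ext s hs
      rw [hm]
      simp only [Measure.smul_apply, Measure.add_apply, smul_eq_mul]
      rw [← two_mul, ← mul_assoc, mul_comm (1/2:ℝ≥0∞) 2, hhalf, one_mul]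
    have h0 : ∫ x, llr ν m x ∂ν = 0 := by
      rw [hmμ]
      have hae : ∀ᵐ x ∂ν, llr ν ν x = 0 := (Measure.rnDeriv_self ν).mono fun x hx => by
        simp [llr, hx]
      rw [integral_congr_ae hae, integral_zero]
    rw [h0]; ring
end

section
/- Let X be a measurable space, let μ and ν be probability measures on X, and let D : X → ℝ be a measurable function with 0 < D(x) < 1 for all x. Assume log ∘ D is integrable with respect to μ and log ∘ (1 − D) is integrable with respect to ν. Then ∫ log(D) dμ + ∫ log(1 − D) dν ≤ ∫ log(dμ/d(μ+ν)) dμ + ∫ log(dν/d(μ+ν)) dν, where dμ/d(μ+ν) and dν/d(μ+ν) denote Radon–Nikodym derivatives with respect to the (finite) measure μ + ν. (The right-hand side integrals are finite: each integrand is nonpositive and each integral is at least −log 2.) -/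
open MeasureTheory

lemma aux_gibbs {X : Type*} [MeasurableSpace X] (μ ρ : Measure X) [IsFiniteMeasure ρ]
    [IsProbabilityMeasure μ] (hμρ : μ ≪ ρ)
    (hF1 : ∀ᵐ x ∂μ, ((μ.rnDeriv ρ) x).toReal ≤ 1)
    (φ : X → ℝ) (hφ : Measurable φ) (hφ01 : ∀ x, φ x ∈ Set.Ioo (0:ℝ) 1)
    (hint : Integrable (fun x => Real.log (φ x)) μ) :
    ∫ x, Real.log (φ x) ∂μ ≤
      ∫ x, Real.log ((μ.rnDeriv ρ) x).toReal ∂μ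
        + ((∫⁻ x, ENNReal.ofReal (φ x) ∂ρ).toReal - 1) := by
  set f := μ.rnDeriv ρ with hf
  have hfm : Measurable f := Measure.measurable_rnDeriv μ ρ
  have h1 : ∀ᵐ x ∂μ, 0 < f x := Measure.rnDeriv_pos hμρ
  have h2 : ∀ᵐ x ∂μ, f x < ⊤ := hμρ.ae_le (Measure.rnDeriv_lt_top μ ρ)
  have hFpos : ∀ᵐ x ∂μ, 0 < (f x).toReal := by
    filter_upwards [h1, h2] with x hx hx'
    exact ENNReal.toReal_pos hx.ne' hx'.ne
  -- integrability of x ↦ (f x)⁻¹.toReal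
  have hlint : ∫⁻ x, (f x)⁻¹ ∂μ ≠ ⊤ := by
    rw [← MeasureTheory.lintegral_rnDeriv_mul (f := fun x => (f x)⁻¹) hμρ hfm.inv.aemeasurable]
    refine ne_top_of_le_ne_top (measure_ne_top ρ Set.univ) ?_
    calc ∫⁻ x, f x * (f x)⁻¹ ∂ρ ≤ ∫⁻ _, 1 ∂ρ :=
          lintegral_mono fun x => ENNReal.mul_inv_le_one (f x)
      _ = ρ Set.univ := lintegral_one
  have hinv : Integrable (fun x => ((f x)⁻¹).toReal) μ :=
    integrable_toReal_of_lintegral_ne_top hfm.inv.aemeasurable hlint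
  have hinv' : Integrable (fun x => ((f x).toReal)⁻¹) μ := by
    simpa [ENNReal.toReal_inv] using hinv
  have hlogF : Integrable (fun x => Real.log ((f x).toReal)) μ := by
    refine hinv'.mono'
      (Real.measurable_log.comp hfm.ennreal_toReal).aestronglyMeasurable ?_
    filter_upwards [hFpos, hF1] with x hx hx1
    have hlog : Real.log ((f x).toReal) ≤ 0 := Real.log_nonpos hx.le hx1
    rw [Real.norm_eq_abs, abs_of_nonpos hlog]
    have : -Real.log ((f x).toReal) = Real.log (((f x).toReal)⁻¹) := (Real.log_inv _).symm
    rw [this]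
    calc Real.log (((f x).toReal)⁻¹) ≤ ((f x).toReal)⁻¹ - 1 :=
          Real.log_le_sub_one_of_pos (by positivity)
      _ ≤ ((f x).toReal)⁻¹ := sub_le_self _ zero_le_one
  have hφF : Integrable (fun x => φ x / (f x).toReal) μ := by
    refine hinv'.mono' (hφ.div hfm.ennreal_toReal).aestronglyMeasurable ?_
    filter_upwards [hFpos] with x hx
    rw [Real.norm_eq_abs, abs_of_nonneg (by exact div_nonneg (hφ01 x).1.le hx.le)]
    calc φ x / (f x).toReal ≤ 1 / (f x).toReal :=
          (div_le_div_iff_of_pos_right hx).mpr (hφ01 x).2.le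
      _ = ((f x).toReal)⁻¹ := one_div _
  -- pointwise Gibbs inequality
  have hpt : ∀ᵐ x ∂μ, Real.log (φ x) ≤
      Real.log ((f x).toReal) + (φ x / (f x).toReal - 1) := by
    filter_upwards [hFpos] with x hx
    have hφx := (hφ01 x).1
    have h := Real.log_le_sub_one_of_pos (div_pos hφx hx)
    rw [Real.log_div hφx.ne' hx.ne'] at h
    linarith
  have hsub : Integrable (fun x => φ x / (f x).toReal - 1) μ := hφF.sub (integrable_const 1)
  have hstep : ∫ x, Real.log (φ x) ∂μ ≤
      ∫ x, (Real.log ((f x).toReal) + (φ x / (f x).toReal - 1)) ∂μ :=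
    integral_mono_ae hint (hlogF.add hsub) hpt
  rw [integral_add hlogF hsub, integral_sub hφF (integrable_const 1), integral_const] at hstep
  simp only [measure_univ, probReal_univ, ENNReal.toReal_one, smul_eq_mul, one_mul, mul_one] at hstep
  -- bound ∫ φ/F dμ by (∫⁻ ofReal φ dρ).toReal
  have hkey : ∫ x, φ x / (f x).toReal ∂μ ≤ (∫⁻ x, ENNReal.ofReal (φ x) ∂ρ).toReal := by
    have hnn : 0 ≤ᵐ[μ] fun x => φ x / (f x).toReal := by
      filter_upwards [hFpos] with x hx
      exact div_nonneg (hφ01 x).1.le hx.le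
    rw [integral_eq_lintegral_of_nonneg_ae hnn
      (hφ.div hfm.ennreal_toReal).aestronglyMeasurable]
    have heq : ∫⁻ x, ENNReal.ofReal (φ x / (f x).toReal) ∂μ
        = ∫⁻ x, f x * ENNReal.ofReal (φ x / (f x).toReal) ∂ρ :=
      (MeasureTheory.lintegral_rnDeriv_mul hμρ
        ((hφ.div hfm.ennreal_toReal).ennreal_ofReal).aemeasurable).symm
    rw [heq]
    have hle : ∫⁻ x, f x * ENNReal.ofReal (φ x / (f x).toReal) ∂ρ
        ≤ ∫⁻ x, ENNReal.ofReal (φ x) ∂ρ := by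
      refine lintegral_mono_ae ?_
      filter_upwards [Measure.rnDeriv_lt_top μ ρ] with x hx
      rcases eq_or_ne (f x) 0 with h0 | h0
      · simp [h0]
      · have hFx : 0 < (f x).toReal := ENNReal.toReal_pos h0 hx.ne
        rw [ENNReal.ofReal_div_of_pos hFx, ENNReal.ofReal_toReal hx.ne,
          ENNReal.mul_div_cancel h0 hx.ne]
    refine ENNReal.toReal_mono ?_ hle
    refine ne_top_of_le_ne_top (measure_ne_top ρ Set.univ) ?_
    calc ∫⁻ x, ENNReal.ofReal (φ x) ∂ρ ≤ ∫⁻ _, 1 ∂ρ :=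
          lintegral_mono fun x => ENNReal.ofReal_le_one.mpr (hφ01 x).2.le
      _ = ρ Set.univ := lintegral_one
  linarith

/-- Optimal discriminator step: for probability measures `μ, ν` and any measurable
discriminator `D : X → ℝ` with values in `(0,1)`, with `log ∘ D` integrable w.r.t. `μ`
and `log ∘ (1 − D)` integrable w.r.t. `ν`, the adversarial objective
`∫ log D dμ + ∫ log (1 − D) dν` is at most the value obtained at the optimal
discriminator `D* = dμ/d(μ+ν)`, namely
`∫ log (dμ/d(μ+ν)) dμ + ∫ log (dν/d(μ+ν)) dν`. -/
theorem adversarial_objective_le_optimal_discriminator {X : Type*} [MeasurableSpace X]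
    (μ ν : Measure X) [IsProbabilityMeasure μ] [IsProbabilityMeasure ν]
    (D : X → ℝ) (hD : Measurable D) (hD01 : ∀ x, D x ∈ Set.Ioo (0 : ℝ) 1)
    (hint₁ : Integrable (fun x => Real.log (D x)) μ)
    (hint₂ : Integrable (fun x => Real.log (1 - D x)) ν) :
    (∫ x, Real.log (D x) ∂μ) + (∫ x, Real.log (1 - D x) ∂ν) ≤
      (∫ x, Real.log ((μ.rnDeriv (μ + ν)) x).toReal ∂μ) +
        (∫ x, Real.log ((ν.rnDeriv (μ + ν)) x).toReal ∂ν) := by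
  set ρ : Measure X := μ + ν with hρ
  have hμρ : μ ≪ ρ := Measure.absolutelyContinuous_of_le (Measure.le_add_right le_rfl)
  have hνρ : ν ≪ ρ := Measure.absolutelyContinuous_of_le (Measure.le_add_left le_rfl)
  -- the derivatives sum to 1 ρ-a.e.
  have hsum : (fun x => μ.rnDeriv ρ x + ν.rnDeriv ρ x) =ᵐ[ρ] fun _ => (1 : ENNReal) := by
    filter_upwards [Measure.rnDeriv_add' μ ν ρ, Measure.rnDeriv_self ρ] with x h1 h2
    rw [← h2, hρ]
    exact h1.symm
  have hle1 : ∀ᵐ x ∂ρ, μ.rnDeriv ρ x ≤ 1 ∧ ν.rnDeriv ρ x ≤ 1 := by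
    filter_upwards [hsum] with x hx
    constructor
    · calc μ.rnDeriv ρ x ≤ μ.rnDeriv ρ x + ν.rnDeriv ρ x := le_self_add
        _ = 1 := hx
    · calc ν.rnDeriv ρ x ≤ μ.rnDeriv ρ x + ν.rnDeriv ρ x := le_add_self
        _ = 1 := hx
  have hF1 : ∀ᵐ x ∂μ, ((μ.rnDeriv ρ) x).toReal ≤ 1 := by
    filter_upwards [hμρ.ae_le hle1] with x hx
    simpa using ENNReal.toReal_mono ENNReal.one_ne_top hx.1
  have hG1 : ∀ᵐ x ∂ν, ((ν.rnDeriv ρ) x).toReal ≤ 1 := by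
    filter_upwards [hνρ.ae_le hle1] with x hx
    simpa using ENNReal.toReal_mono ENNReal.one_ne_top hx.2
  have hA := aux_gibbs μ ρ hμρ hF1 D hD hD01 hint₁
  have hB := aux_gibbs ν ρ hνρ hG1 (fun x => 1 - D x) (measurable_const.sub hD)
    (fun x => ⟨show (0:ℝ) < 1 - D x by linarith [(hD01 x).2],
      show (1:ℝ) - D x < 1 by linarith [(hD01 x).1]⟩) hint₂
  -- the two lintegrals sum to ρ(univ) = 2
  have hAB : (∫⁻ x, ENNReal.ofReal (D x) ∂ρ) + (∫⁻ x, ENNReal.ofReal (1 - D x) ∂ρ)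
      = 2 := by
    rw [← lintegral_add_left hD.ennreal_ofReal]
    have : ∀ x, ENNReal.ofReal (D x) + ENNReal.ofReal (1 - D x) = 1 := by
      intro x
      rw [← ENNReal.ofReal_add (hD01 x).1.le (by linarith [(hD01 x).2]), ← ENNReal.ofReal_one]
      congr 1
      ring
    simp only [this, lintegral_one]
    simp [hρ, Measure.add_apply]
    norm_num
  have h1top : (∫⁻ x, ENNReal.ofReal (D x) ∂ρ) ≠ ⊤ :=
    ne_top_of_le_ne_top (by norm_num) (hAB ▸ le_self_add)
  have h2top : (∫⁻ x, ENNReal.ofReal (1 - D x) ∂ρ) ≠ ⊤ :=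
    ne_top_of_le_ne_top (by norm_num) (hAB ▸ le_add_self)
  have htR : (∫⁻ x, ENNReal.ofReal (D x) ∂ρ).toReal
      + (∫⁻ x, ENNReal.ofReal (1 - D x) ∂ρ).toReal = 2 := by
    rw [← ENNReal.toReal_add h1top h2top, hAB]
    norm_num
  linarith
end

section
/- Let X be a measurable space, let μ and ν be probability measures on X, and let m = (1/2)•(μ + ν). Then ∫ log(dμ/d(μ+ν)) dμ = KL(μ ‖ m) − log 2, where dμ/d(μ+ν) is the Radon–Nikodym derivative of μ with respect to μ + ν, and both sides are finite real numbers (indeed 0 ≤ KL(μ ‖ m) ≤ log 2). -/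
open MeasureTheory
open scoped ENNReal

/-- On `[0,2]`, the function `t * log t` is bounded in absolute value by `2`. -/
lemma aux_abs_mul_log_le_two {t : ℝ} (h0 : 0 ≤ t) (h2 : t ≤ 2) : |t * Real.log t| ≤ 2 := by
  rcases eq_or_lt_of_le h0 with h | h
  · simp [← h]
  rcases le_or_gt t 1 with h1 | h1
  · have hlog : Real.log t ≤ 0 := Real.log_nonpos h0 h1
    have hinv : Real.log t⁻¹ ≤ t⁻¹ - 1 := Real.log_le_sub_one_of_pos (by positivity)
    rw [Real.log_inv] at hinv
    have : t * (-Real.log t) ≤ t * (t⁻¹ - 1) := by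
      apply mul_le_mul_of_nonneg_left _ h0
      linarith
    rw [mul_sub, mul_inv_cancel₀ h.ne'] at this
    have habs : |t * Real.log t| = t * (-Real.log t) := by
      rw [abs_of_nonpos (mul_nonpos_of_nonneg_of_nonpos h0 hlog)]; ring
    rw [habs]; nlinarith
  · have hlog0 : 0 ≤ Real.log t := Real.log_nonneg h1.le
    have hlog2 : Real.log t ≤ 1 := by
      have := Real.log_le_sub_one_of_pos (show (0:ℝ) < t by linarith)
      linarith
    rw [abs_of_nonneg (mul_nonneg h0 hlog0)]
    nlinarith

/-- For probability measures `μ, ν` and the midpoint measure `m = (1/2) • (μ + ν)`,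
`∫ log (dμ/d(μ+ν)) dμ = KL(μ ‖ m) − log 2`, and moreover `0 ≤ KL(μ ‖ m) ≤ log 2`. -/
theorem integral_log_rnDeriv_eq_klDiv_midpoint_sub_log_two {X : Type*} [MeasurableSpace X]
    (μ ν : Measure X) [IsProbabilityMeasure μ] [IsProbabilityMeasure ν]
    (m : Measure X) (hm : m = (1/2 : ℝ≥0∞) • (μ + ν)) :
    (∫ x, Real.log ((μ.rnDeriv (μ + ν)) x).toReal ∂μ) = klDiv μ m - Real.log 2 ∧
      0 ≤ klDiv μ m ∧ klDiv μ m ≤ Real.log 2 := by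
  have hac : μ ≪ μ + ν := (Measure.AbsolutelyContinuous.refl μ).add_right ν
  have hρm : (μ + ν) ≪ m := by
    rw [hm]; exact Measure.absolutelyContinuous_smul (by norm_num)
  have hmρ : m ≪ μ + ν := by
    rw [hm]; exact Measure.smul_absolutelyContinuous
  have hacm : μ ≪ m := hac.trans hρm
  have hmprob : IsProbabilityMeasure m := by
    constructor
    rw [hm]
    simp [Measure.smul_apply, Measure.add_apply, measure_univ]
    exact ENNReal.inv_two_add_inv_two
  -- rnDeriv μ m ≤ 2 a.e. (μ + ν), hence a.e. m and a.e. μ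
  have h2 : ∀ᵐ x ∂(μ + ν), μ.rnDeriv m x ≤ 2 := by
    have hsmul : μ.rnDeriv m =ᵐ[μ + ν] (1/2 : ℝ≥0∞)⁻¹ • μ.rnDeriv (μ + ν) := by
      rw [hm]
      exact Measure.rnDeriv_smul_right_of_ne_top μ (μ + ν) (by norm_num) (by norm_num)
    have hle1 : μ.rnDeriv (μ + ν) ≤ᵐ[μ + ν] 1 :=
      Measure.rnDeriv_le_one_of_le (Measure.le_add_right le_rfl)
    filter_upwards [hsmul, hle1] with x hx h1
    rw [hx]
    simp only [Pi.smul_apply, smul_eq_mul]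
    calc (1/2 : ℝ≥0∞)⁻¹ * μ.rnDeriv (μ + ν) x ≤ (1/2 : ℝ≥0∞)⁻¹ * 1 := by
          exact mul_le_mul_right h1 _
      _ = 2 := by norm_num [ENNReal.inv_div]
  have h2m : ∀ᵐ x ∂m, μ.rnDeriv m x ≤ 2 := hmρ.ae_le h2
  have h2μ : ∀ᵐ x ∂μ, μ.rnDeriv m x ≤ 2 := hac.ae_le h2
  -- integrability of the log-likelihood ratio w.r.t. μ
  have h_int : Integrable (MeasureTheory.llr μ m) μ := by
    rw [← MeasureTheory.integrable_rnDeriv_smul_iff hacm]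
    refine Integrable.mono' (integrable_const (2 : ℝ))
      (((Measure.measurable_rnDeriv μ m).ennreal_toReal.smul
        (measurable_llr μ m)).aestronglyMeasurable) ?_
    filter_upwards [h2m] with x hx
    have h0 : (0:ℝ) ≤ (μ.rnDeriv m x).toReal := ENNReal.toReal_nonneg
    have h2' : (μ.rnDeriv m x).toReal ≤ 2 := by
      calc (μ.rnDeriv m x).toReal ≤ ((2 : ℝ≥0∞)).toReal :=
            ENNReal.toReal_mono (by norm_num) hx
        _ = 2 := by norm_num
    show ‖(μ.rnDeriv m x).toReal • MeasureTheory.llr μ m x‖ ≤ 2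
    rw [smul_eq_mul, Real.norm_eq_abs]
    exact aux_abs_mul_log_le_two h0 h2'
  have hkl : klDiv μ m = ∫ x, MeasureTheory.llr μ m x ∂μ := rfl
  -- upper bound: KL ≤ log 2
  have h_ub : klDiv μ m ≤ Real.log 2 := by
    rw [hkl]
    have hle : ∀ᵐ x ∂μ, MeasureTheory.llr μ m x ≤ Real.log 2 := by
      filter_upwards [h2μ] with x hx
      rcases eq_or_ne ((μ.rnDeriv m x).toReal) 0 with h0 | h0
      · simp [MeasureTheory.llr, h0]
        positivity
      · have hpos : 0 < (μ.rnDeriv m x).toReal :=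
          lt_of_le_of_ne ENNReal.toReal_nonneg (Ne.symm h0)
        have h2' : (μ.rnDeriv m x).toReal ≤ 2 := by
          calc (μ.rnDeriv m x).toReal ≤ ((2 : ℝ≥0∞)).toReal :=
                ENNReal.toReal_mono (by norm_num) hx
            _ = 2 := by norm_num
        exact Real.log_le_log hpos h2'
    calc ∫ x, MeasureTheory.llr μ m x ∂μ ≤ ∫ _, Real.log 2 ∂μ :=
          integral_mono_ae h_int (integrable_const _) hle
      _ = Real.log 2 := by simp
  -- lower bound: 0 ≤ KL, via Jensen's inequality (exp form)
  have h_lb : 0 ≤ klDiv μ m := by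
    set g : X → ℝ := fun x ↦ - MeasureTheory.llr μ m x with hg
    have hg_int : Integrable g μ := h_int.neg
    set c : ℝ := ∫ x, g x ∂μ with hc
    have hexp : (fun x ↦ Real.exp (g x)) =ᵐ[μ] fun x ↦ (m.rnDeriv μ x).toReal :=
      MeasureTheory.exp_neg_llr hacm
    have hexp_int : Integrable (fun x ↦ Real.exp (g x)) μ :=
      (Measure.integrable_toReal_rnDeriv).congr hexp.symm
    have h_integral_exp_le : ∫ x, Real.exp (g x) ∂μ ≤ 1 := by
      rw [integral_congr_ae hexp]
      have := Measure.setIntegral_toReal_rnDeriv_le (μ := m) (ν := μ)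
        (s := Set.univ) (measure_ne_top m Set.univ)
      rw [setIntegral_univ] at this
      simpa [measure_univ] using this
    have hjensen : Real.exp c ≤ ∫ x, Real.exp (g x) ∂μ := by
      have hpt : ∀ x, Real.exp c * (1 + (g x - c)) ≤ Real.exp (g x) := by
        intro x
        have h1 : 1 + (g x - c) ≤ Real.exp (g x - c) := by
          have := Real.add_one_le_exp (g x - c)
          linarith
        calc Real.exp c * (1 + (g x - c)) ≤ Real.exp c * Real.exp (g x - c) :=
              mul_le_mul_of_nonneg_left h1 (Real.exp_pos c).le
          _ = Real.exp (g x) := by rw [← Real.exp_add]; ring_nf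
      have h_lhs_int : Integrable (fun x ↦ Real.exp c * (1 + (g x - c))) μ := by
        apply Integrable.const_mul
        exact (integrable_const (1 : ℝ)).add (hg_int.sub (integrable_const c))
      have h_mono : ∫ x, Real.exp c * (1 + (g x - c)) ∂μ ≤ ∫ x, Real.exp (g x) ∂μ :=
        integral_mono h_lhs_int hexp_int hpt
      have hsub : Integrable (fun x ↦ g x - c) μ := hg_int.sub (integrable_const c)
      have h_lhs : ∫ x, Real.exp c * (1 + (g x - c)) ∂μ = Real.exp c := by
        rw [integral_const_mul, integral_add (integrable_const (1 : ℝ)) hsub,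
          integral_sub hg_int (integrable_const c)]
        simp [measure_univ, ← hc]
      rw [h_lhs] at h_mono
      exact h_mono
    have hc_le : c ≤ 0 := by
      rw [← Real.exp_le_one_iff]
      exact hjensen.trans h_integral_exp_le
    have : klDiv μ m = -c := by
      rw [hkl, hc, hg]
      rw [integral_neg]
      ring
    rw [this]
    linarith
  -- the main equality
  have h_eq : (∫ x, Real.log ((μ.rnDeriv (μ + ν)) x).toReal ∂μ)
      = klDiv μ m - Real.log 2 := by
    have hsmul := MeasureTheory.llr_smul_right hac (1/2 : ℝ≥0∞) (by norm_num) (by norm_num)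
    have hm' : MeasureTheory.llr μ m =ᵐ[μ]
        fun x ↦ MeasureTheory.llr μ (μ + ν) x - Real.log ((1/2 : ℝ≥0∞)).toReal := by
      rw [hm]; exact hsmul
    have htor : ((1/2 : ℝ≥0∞)).toReal = (1/2 : ℝ) := by
      rw [ENNReal.toReal_div]; norm_num
    have hlog : Real.log ((1/2 : ℝ≥0∞)).toReal = - Real.log 2 := by
      rw [htor, one_div, Real.log_inv]
    have hm'' : (fun x ↦ MeasureTheory.llr μ (μ + ν) x) =ᵐ[μ]
        fun x ↦ MeasureTheory.llr μ m x - Real.log 2 := by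
      filter_upwards [hm'] with x hx
      rw [hx, hlog]
      ring
    calc (∫ x, Real.log ((μ.rnDeriv (μ + ν)) x).toReal ∂μ)
        = ∫ x, MeasureTheory.llr μ (μ + ν) x ∂μ := rfl
      _ = ∫ x, (MeasureTheory.llr μ m x - Real.log 2) ∂μ := integral_congr_ae hm''
      _ = (∫ x, MeasureTheory.llr μ m x ∂μ) - ∫ _, Real.log 2 ∂μ :=
          integral_sub h_int (integrable_const _)
      _ = klDiv μ m - Real.log 2 := by rw [hkl]; simp
  exact ⟨h_eq, h_lb, h_ub⟩
end

section
/- Let X be a measurable space, let μ and ν be probability measures on X, and let m = (1/2)•(μ + ν). Then ∫ log(dμ/d(μ+ν)) dμ + ∫ log(dν/d(μ+ν)) dν = KL(μ ‖ m) + KL(ν ‖ m) − log 4, where dμ/d(μ+ν) and dν/d(μ+ν) denote Radon–Nikodym derivatives with respect to μ + ν and all quantities are finite. -/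
open MeasureTheory
open scoped ENNReal

lemma integrable_llr_add_right' {X : Type*} [MeasurableSpace X]
    (μ ν : Measure X) [IsFiniteMeasure μ] [IsFiniteMeasure ν] :
    Integrable (llr μ (μ + ν)) μ := by
  have hac : μ ≪ μ + ν := Measure.AbsolutelyContinuous.rfl.add_right ν
  have h_le_one : μ.rnDeriv (μ + ν) ≤ᵐ[μ + ν] 1 :=
    Measure.rnDeriv_le_one_of_le (Measure.le_add_right le_rfl)
  have h_pos := Measure.rnDeriv_pos hac
  have h_lt_top := hac.ae_le (Measure.rnDeriv_lt_top μ (μ + ν))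
  have h_meas : Measurable fun x ↦ (μ.rnDeriv (μ + ν) x)⁻¹ :=
    (Measure.measurable_rnDeriv μ (μ + ν)).inv
  have hg_int : Integrable (fun x ↦ ((μ.rnDeriv (μ + ν) x)⁻¹).toReal) μ := by
    refine ⟨(h_meas.ennreal_toReal).aestronglyMeasurable, ?_⟩
    show (∫⁻ x, ‖((μ.rnDeriv (μ + ν) x)⁻¹).toReal‖₊ ∂μ) < ⊤
    calc ∫⁻ x, ‖((μ.rnDeriv (μ + ν) x)⁻¹).toReal‖₊ ∂μ
        ≤ ∫⁻ x, (μ.rnDeriv (μ + ν) x)⁻¹ ∂μ := by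
          refine lintegral_mono fun x ↦ ?_
          rw [← enorm_eq_nnnorm, ← ofReal_norm, Real.norm_eq_abs,
            abs_of_nonneg ENNReal.toReal_nonneg]
          exact ENNReal.ofReal_toReal_le
      _ = ∫⁻ x, μ.rnDeriv (μ + ν) x * (μ.rnDeriv (μ + ν) x)⁻¹ ∂(μ + ν) :=
          (lintegral_rnDeriv_mul hac h_meas.aemeasurable).symm
      _ ≤ ∫⁻ _, 1 ∂(μ + ν) := lintegral_mono fun x ↦ ENNReal.mul_inv_le_one _
      _ < ⊤ := by simp [lt_top_iff_ne_top, measure_ne_top]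
  refine hg_int.mono' (stronglyMeasurable_llr _ _).aestronglyMeasurable ?_
  filter_upwards [h_pos, h_lt_top, hac.ae_le h_le_one] with x hx0 hxt hx1
  have hxt' : μ.rnDeriv (μ + ν) x ≠ ⊤ := hxt.ne
  have h0 : 0 < (μ.rnDeriv (μ + ν) x).toReal := ENNReal.toReal_pos hx0.ne' hxt'
  have h1 : (μ.rnDeriv (μ + ν) x).toReal ≤ 1 := by
    simpa using ENNReal.toReal_mono ENNReal.one_ne_top hx1
  rw [llr_def, Real.norm_eq_abs, abs_of_nonpos (Real.log_nonpos h0.le h1),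
    ENNReal.toReal_inv]
  have hexp : Real.exp (-Real.log (μ.rnDeriv (μ + ν) x).toReal)
      = ((μ.rnDeriv (μ + ν) x).toReal)⁻¹ := by
    rw [Real.exp_neg, Real.exp_log h0]
  have := Real.add_one_le_exp (-Real.log (μ.rnDeriv (μ + ν) x).toReal)
  rw [hexp] at this
  linarith

lemma klDiv_half_smul {X : Type*} [MeasurableSpace X]
    (μ ν : Measure X) [IsFiniteMeasure μ] [IsProbabilityMeasure ν]
    (hac : ν ≪ μ) (h_int : Integrable (llr ν μ) ν) :
    klDiv ν ((1/2 : ℝ≥0∞) • μ) = (∫ x, llr ν μ x ∂ν) + Real.log 2 := by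
  have h := llr_smul_right hac (1/2 : ℝ≥0∞) (by norm_num) (by norm_num)
  have heq : klDiv ν ((1/2 : ℝ≥0∞) • μ)
      = ∫ x, (llr ν μ x - Real.log ((1/2 : ℝ≥0∞)).toReal) ∂ν := integral_congr_ae h
  rw [heq, integral_sub h_int (integrable_const _), integral_const]
  have h2 : Real.log ((1/2 : ℝ≥0∞)).toReal = -Real.log 2 := by
    rw [show ((1/2 : ℝ≥0∞)).toReal = (2 : ℝ)⁻¹ by simp [ENNReal.toReal_inv], Real.log_inv]
  rw [h2]
  simp [measure_univ]

/-- Decomposition of the adversarial objective at the optimal discriminator: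
`∫ log (dμ/d(μ+ν)) dμ + ∫ log (dν/d(μ+ν)) dν = KL(μ ‖ m) + KL(ν ‖ m) − log 4`
where `m = (1/2) • (μ + ν)`. -/
theorem optimal_adversarial_objective_eq_klDiv_midpoint {X : Type*} [MeasurableSpace X]
    (μ ν : Measure X) [IsProbabilityMeasure μ] [IsProbabilityMeasure ν]
    (m : Measure X) (hm : m = (1/2 : ℝ≥0∞) • (μ + ν)) :
    (∫ x, Real.log ((μ.rnDeriv (μ + ν)) x).toReal ∂μ) +
        (∫ x, Real.log ((ν.rnDeriv (μ + ν)) x).toReal ∂ν) =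
      klDiv μ m + klDiv ν m - Real.log 4 := by
  subst hm
  have hμ : μ ≪ μ + ν := Measure.AbsolutelyContinuous.rfl.add_right ν
  have hν : ν ≪ μ + ν := by
    rw [add_comm]; exact Measure.AbsolutelyContinuous.rfl.add_right μ
  have hμint : Integrable (llr μ (μ + ν)) μ := integrable_llr_add_right' μ ν
  have hνint : Integrable (llr ν (μ + ν)) ν := by
    rw [add_comm]; exact integrable_llr_add_right' ν μ
  rw [klDiv_half_smul (μ + ν) μ hμ hμint, klDiv_half_smul (μ + ν) ν hν hνint]
  have h4 : Real.log 4 = 2 * Real.log 2 := by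
    rw [show (4 : ℝ) = 2 ^ 2 by norm_num, Real.log_pow]; push_cast; ring
  simp only [llr]
  rw [h4]; ring
end

section
/- Let X be a measurable space, let μ and ν be probability measures on X, and let m = (1/2)•(μ + ν). The supremum, over all measurable functions D : X → ℝ with 0 < D(x) < 1 for all x and with log ∘ D integrable with respect to μ and log ∘ (1−D) integrable with respect to ν, of ∫ log(D) dμ + ∫ log(1 − D) dν, equals KL(μ ‖ m) + KL(ν ‖ m) − log 4. Consequently this supremum is at least −log 4, with equality if and only if μ = ν. -/
open MeasureTheory
open scoped ENNReal

/-- Kullback–Leibler divergence of `μ` with respect to `m`, as the integral of the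
logarithm of the Radon–Nikodym derivative (valid whenever `μ ≪ m`). -/
lemma sub_one_le_mul_log {x : ℝ} (hx : 0 ≤ x) : x - 1 ≤ x * Real.log x := by
  rcases eq_or_lt_of_le hx with h | h
  · rw [← h]; simp
  · have h1 : Real.log x⁻¹ ≤ x⁻¹ - 1 := Real.log_le_sub_one_of_pos (by positivity)
    rw [Real.log_inv] at h1
    nlinarith [mul_le_mul_of_nonneg_left h1 hx, mul_inv_cancel₀ h.ne']

lemma eq_one_of_mul_log_eq {x : ℝ} (hx : 0 ≤ x) (h : x * Real.log x = x - 1) : x = 1 := by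
  by_contra hne
  rcases eq_or_lt_of_le hx with h0 | h0
  · rw [← h0] at h; norm_num at h
  · have hxinv : x⁻¹ ≠ 1 := fun hh => hne (by
      have := congrArg (fun t => t⁻¹) hh; simpa using this)
    have h1 : Real.log x⁻¹ < x⁻¹ - 1 :=
      Real.log_lt_sub_one_of_pos (by positivity) hxinv
    rw [Real.log_inv] at h1
    have := mul_lt_mul_of_pos_left h1 h0
    rw [mul_sub, mul_inv_cancel₀ h0.ne'] at this
    nlinarith

lemma abs_mul_log_le_two {x : ℝ} (h0 : 0 ≤ x) (h2 : x ≤ 2) : |x * Real.log x| ≤ 2 := by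
  rcases le_or_gt x 1 with h | h
  · have hle : x * Real.log x ≤ 0 := mul_nonpos_of_nonneg_of_nonpos h0
      (Real.log_nonpos h0 h)
    rw [abs_of_nonpos hle]
    have := sub_one_le_mul_log h0
    linarith
  · have hlog : 0 ≤ Real.log x := Real.log_nonneg h.le
    have hlog2 : Real.log x ≤ 1 := by
      calc Real.log x ≤ x - 1 := Real.log_le_sub_one_of_pos (by linarith)
      _ ≤ 1 := by linarith
    rw [abs_of_nonneg (by positivity)]
    nlinarith

/-- pointwise optimal discriminator inequality -/
lemma discr_point_ineq {a b D : ℝ} (ha : 0 ≤ a) (hb : 0 ≤ b) (hab : a + b = 2)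
    (hD0 : 0 < D) (hD1 : D < 1) :
    a * Real.log D + b * Real.log (1 - D) ≤ a * Real.log (a / 2) + b * Real.log (b / 2) := by
  have key : ∀ c t : ℝ, 0 ≤ c → 0 < t →
      c * Real.log t - c * Real.log (c / 2) ≤ 2 * t - c := by
    intro c t hc ht
    rcases eq_or_lt_of_le hc with h0 | h0
    · simp [← h0]; positivity
    · have hlog : Real.log (t / (c / 2)) ≤ t / (c / 2) - 1 :=
        Real.log_le_sub_one_of_pos (by positivity)
      rw [Real.log_div ht.ne' (by positivity)] at hlog
      have := mul_le_mul_of_nonneg_left hlog hc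
      have hc2 : c * (t / (c / 2) - 1) = 2 * t - c := by field_simp
      rw [hc2] at this
      linarith [this]
  have h1 := key a D ha hD0
  have h2 := key b (1 - D) hb (by linarith)
  linarith

/-- The supremum of the GAN adversarial objective over all admissible discriminators
`D : X → (0,1)` equals `KL(μ ‖ m) + KL(ν ‖ m) − log 4` with `m = (1/2) • (μ + ν)`
(i.e. `2·JS(μ ‖ ν) − log 4`); consequently it is at least `−log 4`, with equality
if and only if `μ = ν`. -/
theorem iSup_adversarial_objective_eq_klDiv_midpoint {X : Type*} [MeasurableSpace X]
    (μ ν : Measure X) [IsProbabilityMeasure μ] [IsProbabilityMeasure ν]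
    (m : Measure X) (hm : m = (1/2 : ℝ≥0∞) • (μ + ν)) :
    sSup {r : ℝ | ∃ D : X → ℝ, Measurable D ∧ (∀ x, D x ∈ Set.Ioo (0 : ℝ) 1) ∧
        Integrable (fun x => Real.log (D x)) μ ∧
        Integrable (fun x => Real.log (1 - D x)) ν ∧
        r = (∫ x, Real.log (D x) ∂μ) + (∫ x, Real.log (1 - D x) ∂ν)} =
      klDiv μ m + klDiv ν m - Real.log 4 ∧
    -Real.log 4 ≤ klDiv μ m + klDiv ν m - Real.log 4 ∧
    (klDiv μ m + klDiv ν m - Real.log 4 = -Real.log 4 ↔ μ = ν) := by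
  set S := {r : ℝ | ∃ D : X → ℝ, Measurable D ∧ (∀ x, D x ∈ Set.Ioo (0 : ℝ) 1) ∧
        Integrable (fun x => Real.log (D x)) μ ∧
        Integrable (fun x => Real.log (1 - D x)) ν ∧
        r = (∫ x, Real.log (D x) ∂μ) + (∫ x, Real.log (1 - D x) ∂ν)} with hS_def
  have hmP : IsProbabilityMeasure m := by
    constructor
    rw [hm]
    simp [Measure.smul_apply, smul_eq_mul]
    rw [← two_mul, ENNReal.mul_inv_cancel] <;> norm_num
  have hacμ : μ ≪ m := by
    refine Measure.AbsolutelyContinuous.mk fun s hs h0 => ?_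
    rw [hm, Measure.smul_apply, Measure.add_apply, smul_eq_mul, mul_eq_zero] at h0
    rcases h0 with h | h
    · exact absurd h (by norm_num)
    · exact (add_eq_zero.mp h).1
  have hacν : ν ≪ m := by
    refine Measure.AbsolutelyContinuous.mk fun s hs h0 => ?_
    rw [hm, Measure.smul_apply, Measure.add_apply, smul_eq_mul, mul_eq_zero] at h0
    rcases h0 with h | h
    · exact absurd h (by norm_num)
    · exact (add_eq_zero.mp h).2
  have h2m : μ + ν = (2 : ℝ≥0∞) • m := by
    rw [hm, smul_smul]
    have : (2 : ℝ≥0∞) * (1/2) = 1 := by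
      rw [one_div, ENNReal.mul_inv_cancel] <;> norm_num
    rw [this, one_smul]
  have hsum_e : μ.rnDeriv m + ν.rnDeriv m =ᵐ[m] fun _ => (2:ℝ≥0∞) := by
    have h1 := (Measure.rnDeriv_add μ ν m).symm
    have h2 : ((2:ℝ≥0∞) • m).rnDeriv m =ᵐ[m] fun _ => (2:ℝ≥0∞) := by
      refine (Measure.rnDeriv_smul_left_of_ne_top m m (by norm_num)).trans ?_
      filter_upwards [Measure.rnDeriv_self m] with x hx
      simp [hx]
    rw [h2m] at h1
    exact h1.trans h2
  set f : X → ℝ := fun x => ((μ.rnDeriv m) x).toReal with hf_def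
  set g : X → ℝ := fun x => ((ν.rnDeriv m) x).toReal with hg_def
  have hfmeas : Measurable f := (Measure.measurable_rnDeriv μ m).ennreal_toReal
  have hgmeas : Measurable g := (Measure.measurable_rnDeriv ν m).ennreal_toReal
  have hfg : ∀ᵐ x ∂m, f x + g x = 2 ∧ f x ≤ 2 ∧ g x ≤ 2 := by
    filter_upwards [hsum_e, Measure.rnDeriv_lt_top μ m, Measure.rnDeriv_lt_top ν m]
      with x hx hfx hgx
    have hxx : μ.rnDeriv m x + ν.rnDeriv m x = 2 := hx
    have hfle : μ.rnDeriv m x ≤ 2 := hxx ▸ le_add_of_nonneg_right zero_le |>.trans le_rfl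
    have hgle : ν.rnDeriv m x ≤ 2 := by
      rw [← hxx]; exact le_add_of_nonneg_left zero_le
    have hfle' : μ.rnDeriv m x ≤ 2 := by
      rw [← hxx]; exact le_add_of_nonneg_right zero_le
    refine ⟨?_, ?_, ?_⟩
    · have := congrArg ENNReal.toReal hxx
      rwa [ENNReal.toReal_add hfx.ne hgx.ne, show ((2:ℝ≥0∞)).toReal = 2 by norm_num] at this
    · exact (ENNReal.toReal_le_of_le_ofReal (by norm_num) (by simpa using hfle'))
    · exact (ENNReal.toReal_le_of_le_ofReal (by norm_num) (by simpa using hgle))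
  have hf0 : ∀ x, 0 ≤ f x := fun x => ENNReal.toReal_nonneg
  have hg0 : ∀ x, 0 ≤ g x := fun x => ENNReal.toReal_nonneg
  -- change of variables
  have hCVμ : ∀ h : X → ℝ, ∫ x, f x * h x ∂m = ∫ x, h x ∂μ := by
    intro h
    simpa [smul_eq_mul] using integral_rnDeriv_smul (f := h) hacμ
  have hCVν : ∀ h : X → ℝ, ∫ x, g x * h x ∂m = ∫ x, h x ∂ν := by
    intro h
    simpa [smul_eq_mul] using integral_rnDeriv_smul (f := h) hacν
  have hIntμ : ∀ h : X → ℝ, Integrable (fun x => f x * h x) m ↔ Integrable h μ := by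
    intro h
    simpa [smul_eq_mul] using integrable_rnDeriv_smul_iff (f := h) hacμ
  have hIntν : ∀ h : X → ℝ, Integrable (fun x => g x * h x) m ↔ Integrable h ν := by
    intro h
    simpa [smul_eq_mul] using integrable_rnDeriv_smul_iff (f := h) hacν
  -- integrability of f log f
  have hIf : Integrable (fun x => f x * Real.log (f x)) m := by
    refine Integrable.mono' (integrable_const 2)
      ((hfmeas.mul (hfmeas.log)).aestronglyMeasurable) ?_
    filter_upwards [hfg] with x hx
    rw [Real.norm_eq_abs]
    exact abs_mul_log_le_two (hf0 x) hx.2.1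
  have hIg : Integrable (fun x => g x * Real.log (g x)) m := by
    refine Integrable.mono' (integrable_const 2)
      ((hgmeas.mul (hgmeas.log)).aestronglyMeasurable) ?_
    filter_upwards [hfg] with x hx
    rw [Real.norm_eq_abs]
    exact abs_mul_log_le_two (hg0 x) hx.2.2
  have hIlogfμ : Integrable (fun x => Real.log (f x)) μ := (hIntμ _).mp hIf
  have hIlogg : Integrable (fun x => Real.log (g x)) ν := (hIntν _).mp hIg
  -- klDiv identities
  have hklμ : klDiv μ m = ∫ x, f x * Real.log (f x) ∂m := (hCVμ fun x => Real.log (f x)).symm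
  have hklν : klDiv ν m = ∫ x, g x * Real.log (g x) ∂m := (hCVν fun x => Real.log (g x)).symm
  -- integral of f over m is 1
  have hintf : ∫ x, f x ∂m = 1 := by
    rw [Measure.integral_toReal_rnDeriv hacμ]; simp
  have hintg : ∫ x, g x ∂m = 1 := by
    rw [Measure.integral_toReal_rnDeriv hacν]; simp
  have hIf' : Integrable f m := Measure.integrable_toReal_rnDeriv
  have hIg' : Integrable g m := Measure.integrable_toReal_rnDeriv
  -- Gibbs inequality
  have hGibbsμ : 0 ≤ klDiv μ m := by
    rw [hklμ]
    have h1 : ∫ x, (f x - 1) ∂m = 0 := by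
      rw [integral_sub hIf' (integrable_const 1), hintf]
      simp
    calc (0:ℝ) = ∫ x, (f x - 1) ∂m := h1.symm
    _ ≤ ∫ x, f x * Real.log (f x) ∂m := by
        refine integral_mono_ae (hIf'.sub (integrable_const 1)) hIf ?_
        exact Filter.Eventually.of_forall fun x => sub_one_le_mul_log (hf0 x)
  have hGibbsν : 0 ≤ klDiv ν m := by
    rw [hklν]
    have h1 : ∫ x, (g x - 1) ∂m = 0 := by
      rw [integral_sub hIg' (integrable_const 1), hintg]
      simp
    calc (0:ℝ) = ∫ x, (g x - 1) ∂m := h1.symm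
    _ ≤ ∫ x, g x * Real.log (g x) ∂m := by
        refine integral_mono_ae (hIg'.sub (integrable_const 1)) hIg ?_
        exact Filter.Eventually.of_forall fun x => sub_one_le_mul_log (hg0 x)
  set K := klDiv μ m + klDiv ν m - Real.log 4 with hK_def
  have hlog4 : Real.log 4 = 2 * Real.log 2 := by
    rw [show (4:ℝ) = 2^2 by norm_num, Real.log_pow]
    push_cast; ring
  have hsplit : ∀ t : ℝ, 0 ≤ t → t * Real.log (t/2) = t * Real.log t - t * Real.log 2 := by
    intro t ht
    rcases eq_or_lt_of_le ht with h|h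
    · rw [← h]; simp
    · rw [Real.log_div h.ne' two_ne_zero]; ring
  have heqf : (fun x => f x * Real.log (f x / 2))
      = fun x => f x * Real.log (f x) - f x * Real.log 2 :=
    funext fun x => hsplit _ (hf0 x)
  have heqg : (fun x => g x * Real.log (g x / 2))
      = fun x => g x * Real.log (g x) - g x * Real.log 2 :=
    funext fun x => hsplit _ (hg0 x)
  have hIf2 : Integrable (fun x => f x * Real.log (f x / 2)) m := by
    rw [heqf]; exact hIf.sub (hIf'.mul_const _)
  have hIg2 : Integrable (fun x => g x * Real.log (g x / 2)) m := by
    rw [heqg]; exact hIg.sub (hIg'.mul_const _)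
  have hintf2 : ∫ x, f x * Real.log (f x / 2) ∂m = klDiv μ m - Real.log 2 := by
    rw [heqf, integral_sub hIf (hIf'.mul_const _), hklμ, integral_mul_const, hintf, one_mul]
  have hintg2 : ∫ x, g x * Real.log (g x / 2) ∂m = klDiv ν m - Real.log 2 := by
    rw [heqg, integral_sub hIg (hIg'.mul_const _), hklν, integral_mul_const, hintg, one_mul]
  have hub : ∀ (D : X → ℝ), (∀ x, D x ∈ Set.Ioo (0:ℝ) 1) →
      Integrable (fun x => Real.log (D x)) μ → Integrable (fun x => Real.log (1 - D x)) ν →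
      (∫ x, Real.log (D x) ∂μ) + (∫ x, Real.log (1 - D x) ∂ν) ≤ K := by
    intro D hD hI1 hI2
    rw [← hCVμ, ← hCVν]
    have hIm1 : Integrable (fun x => f x * Real.log (D x)) m := (hIntμ _).mpr hI1
    have hIm2 : Integrable (fun x => g x * Real.log (1 - D x)) m := (hIntν _).mpr hI2
    rw [← integral_add hIm1 hIm2]
    have hle : ∫ x, (f x * Real.log (D x) + g x * Real.log (1 - D x)) ∂m
        ≤ ∫ x, (f x * Real.log (f x / 2) + g x * Real.log (g x / 2)) ∂m := by
      refine integral_mono_ae (hIm1.add hIm2) (hIf2.add hIg2) ?_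
      filter_upwards [hfg] with x hx
      exact discr_point_ineq (hf0 x) (hg0 x) hx.1 (hD x).1 (hD x).2
    rw [integral_add hIf2 hIg2, hintf2, hintg2] at hle
    rw [hK_def, hlog4]
    linarith
  have hbdd : BddAbove S := by
    refine ⟨K, ?_⟩
    rintro r ⟨D, hDmeas, hD, h1, h2, rfl⟩
    exact hub D hD h1 h2
  have hne : S.Nonempty := by
    refine ⟨Real.log ((1:ℝ)/2) + Real.log (1 - 1/2), fun _ => (1:ℝ)/2, measurable_const,
      fun x => by norm_num, ?_, ?_, ?_⟩
    · exact integrable_const _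
    · exact integrable_const _
    · simp
  -- lower bound via approximate optimal discriminators
  have haeμ2 : ∀ᵐ x ∂μ, 0 < f x ∧ f x + g x = 2 ∧ f x ≤ 2 ∧ g x ≤ 2 := by
    filter_upwards [hacμ.ae_le hfg, Measure.rnDeriv_pos hacμ,
      hacμ.ae_le (Measure.rnDeriv_lt_top μ m)] with x h1 h2 h3
    exact ⟨ENNReal.toReal_pos h2.ne' h3.ne, h1⟩
  have haeν2 : ∀ᵐ x ∂ν, 0 < g x ∧ f x + g x = 2 ∧ f x ≤ 2 ∧ g x ≤ 2 := by
    filter_upwards [hacν.ae_le hfg, Measure.rnDeriv_pos hacν,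
      hacν.ae_le (Measure.rnDeriv_lt_top ν m)] with x h1 h2 h3
    exact ⟨ENNReal.toReal_pos h2.ne' h3.ne, h1⟩
  have hlow : ∀ ε : ℝ, 0 < ε → ε < 1 → K + 2 * Real.log (1 - ε) ≤ sSup S := by
    intro ε hε0 hε1
    have hε1' : (0:ℝ) < 1 - ε := by linarith
    set D : X → ℝ := fun x => ((1 - ε) * min (f x) 2 + ε) / 2 with hD_def
    have hDmeas : Measurable D :=
      (((hfmeas.min measurable_const).const_mul _).add_const _).div_const _
    have hmin0 : ∀ x, 0 ≤ min (f x) 2 := fun x => le_min (hf0 x) (by norm_num)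
    have hmin2 : ∀ x, min (f x) 2 ≤ 2 := fun x => min_le_right _ _
    have hDlb : ∀ x, ε / 2 ≤ D x := by
      intro x; have := hmin0 x; simp only [hD_def]; nlinarith
    have hDub : ∀ x, D x ≤ 1 - ε / 2 := by
      intro x; have := hmin2 x; simp only [hD_def]; nlinarith
    have hDIoo : ∀ x, D x ∈ Set.Ioo (0:ℝ) 1 := by
      intro x
      exact ⟨lt_of_lt_of_le (by linarith) (hDlb x), lt_of_le_of_lt (hDub x) (by linarith)⟩
    have hlogbnd : ∀ c : ℝ, ε / 2 ≤ c → c ≤ 1 → ‖Real.log c‖ ≤ |Real.log (ε / 2)| := by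
      intro c h1 h2
      rw [Real.norm_eq_abs, abs_le]
      constructor
      · calc -|Real.log (ε/2)| ≤ Real.log (ε/2) := neg_abs_le _
        _ ≤ Real.log c := Real.log_le_log (by linarith) h1
      · calc Real.log c ≤ 0 := Real.log_nonpos (by linarith) h2
        _ ≤ |Real.log (ε/2)| := abs_nonneg _
    have hIlogD : Integrable (fun x => Real.log (D x)) μ :=
      Integrable.mono' (integrable_const (|Real.log (ε/2)|))
        (hDmeas.log.aestronglyMeasurable)
        (Filter.Eventually.of_forall fun x => hlogbnd _ (hDlb x) (hDIoo x).2.le)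
    have hIlog1D : Integrable (fun x => Real.log (1 - D x)) ν :=
      Integrable.mono' (integrable_const (|Real.log (ε/2)|))
        ((measurable_const.sub hDmeas).log.aestronglyMeasurable)
        (Filter.Eventually.of_forall fun x => hlogbnd _ (by linarith [hDub x]) (by linarith [hDlb x, hε0]))
    -- lower bound on μ-integral
    have haeμ3 : ∀ᵐ x ∂μ, Real.log (1-ε) + Real.log (f x) - Real.log 2 ≤ Real.log (D x) := by
      filter_upwards [haeμ2] with x hx
      have hfpos : 0 < f x := hx.1
      have hmineq : min (f x) 2 = f x := min_eq_left hx.2.2.1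
      have hDge : (1-ε) * f x / 2 ≤ D x := by
        simp only [hD_def, hmineq]; nlinarith
      calc Real.log (1-ε) + Real.log (f x) - Real.log 2
          = Real.log ((1-ε) * f x / 2) := by
            rw [Real.log_div (mul_pos hε1' hfpos).ne' two_ne_zero,
              Real.log_mul hε1'.ne' hfpos.ne']
      _ ≤ Real.log (D x) := Real.log_le_log (div_pos (mul_pos hε1' hfpos) two_pos) hDge
    have haeν3 : ∀ᵐ x ∂ν, Real.log (1-ε) + Real.log (g x) - Real.log 2
        ≤ Real.log (1 - D x) := by
      filter_upwards [haeν2] with x hx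
      have hgpos : 0 < g x := hx.1
      have hmineq : min (f x) 2 = f x := min_eq_left hx.2.2.1
      have hsum : f x + g x = 2 := hx.2.1
      have hDge : (1-ε) * g x / 2 ≤ 1 - D x := by
        simp only [hD_def, hmineq]; nlinarith
      calc Real.log (1-ε) + Real.log (g x) - Real.log 2
          = Real.log ((1-ε) * g x / 2) := by
            rw [Real.log_div (mul_pos hε1' hgpos).ne' two_ne_zero,
              Real.log_mul hε1'.ne' hgpos.ne']
      _ ≤ Real.log (1 - D x) := Real.log_le_log (div_pos (mul_pos hε1' hgpos) two_pos) hDge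
    have hintμlb : Real.log (1-ε) + klDiv μ m - Real.log 2 ≤ ∫ x, Real.log (D x) ∂μ := by
      have hIlhs : Integrable (fun x => Real.log (1-ε) + Real.log (f x) - Real.log 2) μ :=
        ((integrable_const _).add hIlogfμ).sub (integrable_const _)
      have h := integral_mono_ae hIlhs hIlogD haeμ3
      have hval : ∫ x, (Real.log (1-ε) + Real.log (f x) - Real.log 2) ∂μ
          = Real.log (1-ε) + klDiv μ m - Real.log 2 := by
        have h1 : (fun x => Real.log (1-ε) + Real.log (f x) - Real.log 2)
            = fun x => Real.log (f x) + (Real.log (1-ε) - Real.log 2) := by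
          funext x; ring
        rw [h1, integral_add hIlogfμ (integrable_const _), integral_const]
        have hkl : ∫ x, Real.log (f x) ∂μ = klDiv μ m := rfl
        simp only [probReal_univ, ENNReal.toReal_one, smul_eq_mul, one_mul, hkl]
        ring
      rw [hval] at h
      linarith
    have hintνlb : Real.log (1-ε) + klDiv ν m - Real.log 2
        ≤ ∫ x, Real.log (1 - D x) ∂ν := by
      have hIlhs : Integrable (fun x => Real.log (1-ε) + Real.log (g x) - Real.log 2) ν :=
        ((integrable_const _).add hIlogg).sub (integrable_const _)
      have h := integral_mono_ae hIlhs hIlog1D haeν3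
      have hval : ∫ x, (Real.log (1-ε) + Real.log (g x) - Real.log 2) ∂ν
          = Real.log (1-ε) + klDiv ν m - Real.log 2 := by
        have h1 : (fun x => Real.log (1-ε) + Real.log (g x) - Real.log 2)
            = fun x => Real.log (g x) + (Real.log (1-ε) - Real.log 2) := by
          funext x; ring
        rw [h1, integral_add hIlogg (integrable_const _), integral_const]
        have hkl : ∫ x, Real.log (g x) ∂ν = klDiv ν m := rfl
        simp only [probReal_univ, ENNReal.toReal_one, smul_eq_mul, one_mul, hkl]
        ring
      rw [hval] at h
      linarith
    have hmem : (∫ x, Real.log (D x) ∂μ) + (∫ x, Real.log (1 - D x) ∂ν) ∈ S :=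
      ⟨D, hDmeas, hDIoo, hIlogD, hIlog1D, rfl⟩
    calc K + 2 * Real.log (1-ε)
        ≤ (∫ x, Real.log (D x) ∂μ) + (∫ x, Real.log (1 - D x) ∂ν) := by
          rw [hK_def, hlog4]; linarith
    _ ≤ sSup S := le_csSup hbdd hmem
  have hKle : K ≤ sSup S := by
    refine le_of_forall_pos_le_add fun δ hδ => ?_
    have hε : (0:ℝ) < 1 - Real.exp (-(δ/2)) ∧ 1 - Real.exp (-(δ/2)) < 1 := by
      constructor
      · have : Real.exp (-(δ/2)) < 1 := Real.exp_lt_one_iff.mpr (by linarith)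
        linarith
      · have : 0 < Real.exp (-(δ/2)) := Real.exp_pos _
        linarith
    have h := hlow _ hε.1 hε.2
    rw [show (1:ℝ) - (1 - Real.exp (-(δ/2))) = Real.exp (-(δ/2)) by ring,
      Real.log_exp] at h
    linarith
  have hsup : sSup S = K := by
    refine le_antisymm (csSup_le hne ?_) hKle
    rintro r ⟨D, hDmeas, hD, h1, h2, rfl⟩
    exact hub D hD h1 h2
  -- equality case
  have hiff : K = -Real.log 4 ↔ μ = ν := by
    constructor
    · intro h
      have hμ0 : klDiv μ m = 0 := by
        rw [hK_def] at h; linarith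
      have hν0 : klDiv ν m = 0 := by
        rw [hK_def] at h; linarith
      have key : ∀ (ρ : Measure X) [IsFiniteMeasure ρ], ∀ (hacρ : ρ ≪ m), ∀ h : X → ℝ, h = (fun x => (ρ.rnDeriv m x).toReal) →
          Measurable h → Integrable (fun x => h x * Real.log (h x)) m →
          Integrable h m → (∫ x, h x ∂m) = 1 →
          (∫ x, h x * Real.log (h x) ∂m) = 0 → ρ = m := by
        intro ρ _ hacρ h hh hmeas hInt1 hInt2 hint1 hint0
        have h0 : ∀ x, 0 ≤ h x := fun x => hh ▸ ENNReal.toReal_nonneg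
        have hI3 : Integrable (fun x => h x - 1) m := hInt2.sub (integrable_const 1)
        have hI4 : Integrable (fun x => h x * Real.log (h x) - (h x - 1)) m := hInt1.sub hI3
        have hzero : ∫ x, (h x * Real.log (h x) - (h x - 1)) ∂m = 0 := by
          rw [integral_sub hInt1 hI3, integral_sub hInt2 (integrable_const 1), hint0, hint1]
          simp
        have hae : (fun x => h x * Real.log (h x) - (h x - 1)) =ᵐ[m] 0 :=
          (integral_eq_zero_iff_of_nonneg
            (fun x => by simpa using sub_one_le_mul_log (h0 x)) hI4).mp hzero
        have hone : (fun x => (ρ.rnDeriv m x).toReal) =ᵐ[m] fun _ => (1:ℝ) := by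
          rw [← hh]
          filter_upwards [hae] with x hx
          simp only [Pi.zero_apply] at hx
          exact eq_one_of_mul_log_eq (h0 x) (by linarith)
        have hone' : ρ.rnDeriv m =ᵐ[m] fun _ => (1:ℝ≥0∞) := by
          filter_upwards [hone] with x hx
          exact (ENNReal.toReal_eq_one_iff _).mp hx
        calc ρ = m.withDensity (ρ.rnDeriv m) := (Measure.withDensity_rnDeriv_eq ρ m hacρ).symm
        _ = m.withDensity (fun _ => (1:ℝ≥0∞)) := withDensity_congr_ae hone'
        _ = m := by simp
      have hμm : μ = m := key μ hacμ f rfl hfmeas hIf hIf' hintf (by rw [← hklμ]; exact hμ0)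
      have hνm : ν = m := key ν hacν g rfl hgmeas hIg hIg' hintg (by rw [← hklν]; exact hν0)
      rw [hμm, hνm]
    · intro h
      have hmμ : m = μ := by
        rw [hm, ← h, ← two_smul ℝ≥0∞ μ, smul_smul]
        have : (1/2 : ℝ≥0∞) * 2 = 1 := by
          rw [one_div, ENNReal.inv_mul_cancel] <;> norm_num
        rw [this, one_smul]
      have h0 : klDiv μ μ = 0 := by
        have hae : (fun x => Real.log ((μ.rnDeriv μ) x).toReal) =ᵐ[μ] fun _ => (0:ℝ) := by
          filter_upwards [Measure.rnDeriv_self μ] with x hx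
          rw [hx]; simp
        unfold klDiv
        rw [integral_congr_ae hae, integral_zero]
      rw [hK_def, hmμ, ← h, h0]
      ring
  exact ⟨hsup, by rw [hK_def]; linarith, hiff⟩
end

section
/- Let E be a real inner product space, let x ∈ E, let k ≥ 2 and let Ψ : Fin k → (E → ℝ) be a family of logit functions, each differentiable at x. Let i* ∈ Fin k satisfy Ψ_{i*}(x) ≥ Ψ_j(x) for all j, and let j* ≠ i* satisfy Ψ_{j*}(x) ≥ Ψ_j(x) for all j ≠ i*. For each j ≠ i*, let g_j = ∇(Ψ_{i*} − Ψ_j)(x) denote the gradient at x, and assume g_j ≠ 0 for all j ≠ i*. Define the linearized robustness ρ(x) = min_{j ≠ i*} (Ψ_{i*}(x) − Ψ_j(x))/‖g_j‖, write g = g_{j*}, and define the alignment α(x) = |⟨x, g⟩|/‖g‖. If C ≥ 0 satisfies |(Ψ_{i*}(x) − Ψ_{j*}(x)) − ⟨g, x⟩| ≤ C, then ρ(x) ≤ α(x) + C/‖g‖. -/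
open scoped RealInnerProductSpace Gradient

/-- Linearized robustness bound (Theorem 2, Etmann et al.): for a classifier with logits
`Ψ j` differentiable at `x`, top class `istar`, runner-up class `jstar`, gradients
`g j = ∇(Ψ istar − Ψ j)(x)` all nonzero for `j ≠ istar`, and a constant `C ≥ 0` with
`|(Ψ istar x − Ψ jstar x) − ⟪g jstar, x⟫| ≤ C`, the linearized robustness
`ρ(x) = min_{j ≠ istar} (Ψ istar x − Ψ j x)/‖g j‖` satisfies
`ρ(x) ≤ α(x) + C/‖g jstar‖` where `α(x) = |⟪x, g jstar⟫|/‖g jstar‖`. -/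
theorem linearized_robustness_bound {E : Type*} [NormedAddCommGroup E]
    [InnerProductSpace ℝ E] [CompleteSpace E]
    (x : E) (k : ℕ) (hk : 2 ≤ k) (Ψ : Fin k → E → ℝ)
    (hdiff : ∀ j, DifferentiableAt ℝ (Ψ j) x)
    (istar jstar : Fin k) (hne : jstar ≠ istar)
    (htop : ∀ j, Ψ j x ≤ Ψ istar x)
    (hsecond : ∀ j, j ≠ istar → Ψ j x ≤ Ψ jstar x)
    (g : Fin k → E) (hgdef : ∀ j, g j = ∇ (fun y => Ψ istar y - Ψ j y) x)
    (hg0 : ∀ j, j ≠ istar → g j ≠ 0)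
    (C : ℝ) (hC : 0 ≤ C)
    (hlin : |(Ψ istar x - Ψ jstar x) - ⟪g jstar, x⟫| ≤ C) :
    (⨅ j : {j : Fin k // j ≠ istar}, (Ψ istar x - Ψ j.1 x) / ‖g j.1‖) ≤
      |⟪x, g jstar⟫| / ‖g jstar‖ + C / ‖g jstar‖ := by
  have hgpos : 0 < ‖g jstar‖ := norm_pos_iff.mpr (hg0 jstar hne)
  have h1 : (⨅ j : {j : Fin k // j ≠ istar}, (Ψ istar x - Ψ j.1 x) / ‖g j.1‖) ≤
      (Ψ istar x - Ψ jstar x) / ‖g jstar‖ :=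
    ciInf_le (Set.Finite.bddBelow (Set.finite_range _)) (⟨jstar, hne⟩ : {j : Fin k // j ≠ istar})
  refine h1.trans ?_
  rw [← add_div, div_le_div_iff_of_pos_right hgpos]
  have h2 : Ψ istar x - Ψ jstar x ≤ ⟪g jstar, x⟫ + C := by
    have := (abs_le.mp hlin).2; linarith
  calc Ψ istar x - Ψ jstar x ≤ ⟪g jstar, x⟫ + C := h2
    _ ≤ |⟪x, g jstar⟫| + C := by
        rw [real_inner_comm]; exact add_le_add (le_abs_self _) le_rfl
end
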